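/- Let f : ℝⁿ → ℝⁿ be continuously differentiable with f' Lipschitz with constant L on an open convex set Ω, let g : Ω → ℝⁿ admit divided differences with second-order divided differences bounded by M, let x*, x, x', z ∈ B_α[x*] ⊆ Ω, and let ε > 0 satisfy 2Lα < ε. Define h(x) := f(x*) + g(x*) + [f'(x*) + [z, x*; g]](x - x*) - f(x) - g(x). Then h(x*) = 0 and ‖h(x) - h(x')‖ ≤ (ε + 3αM)‖x - x'‖ for all x, x' ∈ B_α[x*]. -/

import Mathlib

open Metric

theorem stmt_18 {n : ℕ} (Ω : Set (EuclideanSpace ℝ (Fin n))) (hΩ : IsOpen Ω)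
    (hconv : Convex ℝ Ω)
    (f : EuclideanSpace ℝ (Fin n) → EuclideanSpace ℝ (Fin n))
    (f' : EuclideanSpace ℝ (Fin n) → EuclideanSpace ℝ (Fin n) →L[ℝ] EuclideanSpace ℝ (Fin n))
    (hdiff : ∀ u ∈ Ω, HasFDerivAt f (f' u) u)
    (hfcont : ContinuousOn f' Ω)
    (L : ℝ) (hL : 0 < L)
    (hLip : ∀ u ∈ Ω, ∀ v ∈ Ω, ‖f' u - f' v‖ ≤ L * ‖u - v‖)
    (g : EuclideanSpace ℝ (Fin n) → EuclideanSpace ℝ (Fin n))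
    (D1 : EuclideanSpace ℝ (Fin n) → EuclideanSpace ℝ (Fin n) →
      (EuclideanSpace ℝ (Fin n) →L[ℝ] EuclideanSpace ℝ (Fin n)))
    (D2 : EuclideanSpace ℝ (Fin n) → EuclideanSpace ℝ (Fin n) → EuclideanSpace ℝ (Fin n) →
      (EuclideanSpace ℝ (Fin n) →L[ℝ]
        EuclideanSpace ℝ (Fin n) →L[ℝ] EuclideanSpace ℝ (Fin n)))
    (hD1 : ∀ x ∈ Ω, ∀ y ∈ Ω, D1 x y (y - x) = g y - g x)
    (hD2 : ∀ x ∈ Ω, ∀ y ∈ Ω, ∀ z ∈ Ω, D2 x y z (z - x) = D1 y z - D1 x y)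
    (M : ℝ) (hM : 0 < M)
    (hbound : ∀ x ∈ Ω, ∀ y ∈ Ω, ∀ z ∈ Ω, ‖D2 x y z‖ ≤ M)
    (xs z : EuclideanSpace ℝ (Fin n)) (α : ℝ) (hα : 0 < α)
    (hball : closedBall xs α ⊆ Ω) (hzball : z ∈ closedBall xs α)
    (ε : ℝ) (hε : 0 < ε) (hLαε : 2 * L * α < ε)
    (h : EuclideanSpace ℝ (Fin n) → EuclideanSpace ℝ (Fin n))
    (hdef : ∀ w, h w = f xs + g xs + (f' xs + D1 z xs) (w - xs) - f w - g w) :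
    h xs = 0 ∧ ∀ x ∈ closedBall xs α, ∀ x' ∈ closedBall xs α,
      ‖h x - h x'‖ ≤ (ε + 3 * α * M) * ‖x - x'‖ := by

  have hxs : xs ∈ closedBall xs α := mem_closedBall_self hα.le
  constructor
  · rw [hdef]; simp
  · intro x hx x' hx'
    have hxΩ := hball hx
    have hx'Ω := hball hx'
    have hxsΩ := hball hxs
    have hzΩ := hball hzball
    have hmv : ‖f x - f x' - (f' xs) (x - x')‖ ≤ (L * α) * ‖x - x'‖ := by
      apply Convex.norm_image_sub_le_of_norm_hasFDerivWithin_le'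
        (fun w hw => (hdiff w (hball hw)).hasFDerivWithinAt) ?_
        (convex_closedBall xs α) hx' hx
      intro w hw
      calc ‖f' w - f' xs‖ ≤ L * ‖w - xs‖ := hLip w (hball hw) xs hxsΩ
        _ ≤ L * α := by
          have hwn : ‖w - xs‖ ≤ α := by
            rw [← dist_eq_norm]; exact mem_closedBall.mp hw
          nlinarith
    have hg : g x - g x' = D1 x' x (x - x') := (hD1 x' hx'Ω x hxΩ).symm
    have hd2a : D2 z xs x' (x' - z) = D1 xs x' - D1 z xs := hD2 z hzΩ xs hxsΩ x' hx'Ω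
    have hd2b : D2 xs x' x (x - xs) = D1 x' x - D1 xs x' := hD2 xs hxsΩ x' hx'Ω x hxΩ
    have hDeq : D1 x' x - D1 z xs = D2 z xs x' (x' - z) + D2 xs x' x (x - xs) := by
      rw [hd2a, hd2b]; abel
    have hx'z : ‖x' - z‖ ≤ 2 * α := by
      have h1 : dist x' xs ≤ α := mem_closedBall.mp hx'
      have h2 : dist z xs ≤ α := mem_closedBall.mp hzball
      calc ‖x' - z‖ = dist x' z := (dist_eq_norm _ _).symm
        _ ≤ dist x' xs + dist xs z := dist_triangle _ _ _
        _ ≤ α + α := by rw [dist_comm xs z]; linarith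
        _ = 2 * α := by ring
    have hxxs : ‖x - xs‖ ≤ α := by rw [← dist_eq_norm]; exact mem_closedBall.mp hx
    have hDn : ‖D1 x' x - D1 z xs‖ ≤ 3 * α * M := by
      rw [hDeq]
      have h1 : ‖D2 z xs x' (x' - z)‖ ≤ M * (2 * α) := by
        calc ‖D2 z xs x' (x' - z)‖ ≤ ‖D2 z xs x'‖ * ‖x' - z‖ :=
              (D2 z xs x').le_opNorm _
          _ ≤ M * (2 * α) := by
              have := hbound z hzΩ xs hxsΩ x' hx'Ω
              have hn : (0:ℝ) ≤ ‖x' - z‖ := norm_nonneg _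
              nlinarith [norm_nonneg (D2 z xs x')]
      have h2 : ‖D2 xs x' x (x - xs)‖ ≤ M * α := by
        calc ‖D2 xs x' x (x - xs)‖ ≤ ‖D2 xs x' x‖ * ‖x - xs‖ :=
              (D2 xs x' x).le_opNorm _
          _ ≤ M * α := by
              have := hbound xs hxsΩ x' hx'Ω x hxΩ
              nlinarith [norm_nonneg (D2 xs x' x), norm_nonneg (x - xs)]
      calc ‖D2 z xs x' (x' - z) + D2 xs x' x (x - xs)‖
          ≤ ‖D2 z xs x' (x' - z)‖ + ‖D2 xs x' x (x - xs)‖ := norm_add_le _ _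
        _ ≤ M * (2 * α) + M * α := add_le_add h1 h2
        _ = 3 * α * M := by ring
    have hsplit : h x - h x' =
        (f' xs (x - x') - (f x - f x')) - (D1 x' x - D1 z xs) (x - x') := by
      have e1 : f' xs (x - xs) - f' xs (x' - xs) = f' xs (x - x') := by
        rw [← map_sub]; congr 1; abel
      have e2 : D1 z xs (x - xs) - D1 z xs (x' - xs) = D1 z xs (x - x') := by
        rw [← map_sub]; congr 1; abel
      rw [hdef x, hdef x']
      simp only [ContinuousLinearMap.add_apply, ContinuousLinearMap.sub_apply]
      rw [← e1, ← e2, ← hg]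
      abel
    rw [hsplit]
    have hb : ‖(D1 x' x - D1 z xs) (x - x')‖ ≤ (3 * α * M) * ‖x - x'‖ := by
      calc ‖(D1 x' x - D1 z xs) (x - x')‖ ≤ ‖D1 x' x - D1 z xs‖ * ‖x - x'‖ :=
            (D1 x' x - D1 z xs).le_opNorm _
        _ ≤ (3 * α * M) * ‖x - x'‖ :=
            mul_le_mul_of_nonneg_right hDn (norm_nonneg _)
    have hmv' : ‖f' xs (x - x') - (f x - f x')‖ ≤ (L * α) * ‖x - x'‖ := by
      rw [← norm_neg, neg_sub]; exact hmv
    calc ‖(f' xs (x - x') - (f x - f x')) - (D1 x' x - D1 z xs) (x - x')‖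
        ≤ ‖f' xs (x - x') - (f x - f x')‖ + ‖(D1 x' x - D1 z xs) (x - x')‖ :=
          norm_sub_le _ _
      _ ≤ (L * α) * ‖x - x'‖ + (3 * α * M) * ‖x - x'‖ := add_le_add hmv' hb
      _ ≤ (ε + 3 * α * M) * ‖x - x'‖ := by nlinarith [norm_nonneg (x - x')]
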